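/- Let X be a pointed metric space with basepoint 0, and E a Banach space. The map T ↦ T_L sending each Lipschitz map T : X → E with T(0) = 0 to its unique continuous linear extension T_L : Æ(X) → E (satisfying T = T_L ∘ δ_X) is an isometric isomorphism from Lip₀(X, E) with the Lipschitz norm onto the space L(Æ(X), E) of continuous linear operators with the operator norm. -/

import Mathlib

open Metric Set

/-- A continuous linear operator has finite rank. -/
def FinRank {E F : Type} [NormedAddCommGroup E] [NormedSpace ℝ E]
    [NormedAddCommGroup F] [NormedSpace ℝ F] (T : E →L[ℝ] F) : Prop :=
  FiniteDimensional ℝ (LinearMap.range (T : E →ₗ[ℝ] F))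

/-- The approximation property. -/
def HasAP (E : Type) [NormedAddCommGroup E] [NormedSpace ℝ E] : Prop :=
  ∀ K : Set E, IsCompact K → ∀ ε : ℝ, 0 < ε →
    ∃ S : E →L[ℝ] E, FinRank S ∧ ∀ x ∈ K, ‖S x - x‖ ≤ ε

/-- An operator ideal on the class of (real) Banach spaces. -/
structure OpIdeal where
  mem : ∀ (G E : Type) [NormedAddCommGroup G] [NormedSpace ℝ G] [CompleteSpace G]
      [NormedAddCommGroup E] [NormedSpace ℝ E] [CompleteSpace E], (G →L[ℝ] E) → Prop
  finRank_mem : ∀ (G E : Type) [NormedAddCommGroup G] [NormedSpace ℝ G] [CompleteSpace G]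
      [NormedAddCommGroup E] [NormedSpace ℝ E] [CompleteSpace E] (T : G →L[ℝ] E),
      FinRank T → mem G E T
  comp_left : ∀ (G E F : Type) [NormedAddCommGroup G] [NormedSpace ℝ G] [CompleteSpace G]
      [NormedAddCommGroup E] [NormedSpace ℝ E] [CompleteSpace E]
      [NormedAddCommGroup F] [NormedSpace ℝ F] [CompleteSpace F]
      (T : G →L[ℝ] E) (u : E →L[ℝ] F), mem G E T → mem G F (u.comp T)
  comp_right : ∀ (G E F : Type) [NormedAddCommGroup G] [NormedSpace ℝ G] [CompleteSpace G]
      [NormedAddCommGroup E] [NormedSpace ℝ E] [CompleteSpace E]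
      [NormedAddCommGroup F] [NormedSpace ℝ F] [CompleteSpace F]
      (T : G →L[ℝ] E) (v : F →L[ℝ] G), mem G E T → mem F E (T.comp v)

/-- A set `B` is relatively `I`-compact. -/
def RelICompact (I : OpIdeal) (E : Type) [NormedAddCommGroup E] [NormedSpace ℝ E]
    [CompleteSpace E] (B : Set E) : Prop :=
  ∃ (G : Type) (_ : NormedAddCommGroup G) (_ : NormedSpace ℝ G) (_ : CompleteSpace G)
    (M : Set G) (S : G →L[ℝ] E), IsCompact M ∧ I.mem G E S ∧ B ⊆ S '' M

/-- An `I`-compact operator. -/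
def ICompactOp (I : OpIdeal) {E F : Type} [NormedAddCommGroup E] [NormedSpace ℝ E]
    [CompleteSpace E] [NormedAddCommGroup F] [NormedSpace ℝ F] [CompleteSpace F]
    (T : E →L[ℝ] F) : Prop :=
  RelICompact I F (T '' closedBall (0:E) 1)

/-- An `I`-bounded set. -/
def IBounded (I : OpIdeal) (E : Type) [NormedAddCommGroup E] [NormedSpace ℝ E]
    [CompleteSpace E] (B : Set E) : Prop :=
  ∃ (G : Type) (_ : NormedAddCommGroup G) (_ : NormedSpace ℝ G) (_ : CompleteSpace G)
    (S : G →L[ℝ] E), I.mem G E S ∧ B ⊆ S '' closedBall (0:G) 1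

/-- A Lipschitz finite-rank map: image spans a finite-dimensional subspace. -/
def LipFinRank {X E : Type} [MetricSpace X] [NormedAddCommGroup E] [NormedSpace ℝ E]
    (x₀ : X) (f : X → E) : Prop :=
  (∃ L : NNReal, LipschitzWith L f) ∧ f x₀ = 0 ∧
    FiniteDimensional ℝ (Submodule.span ℝ (Set.range f))

theorem stmt7 (X : Type) [MetricSpace X] (x₀ : X)
    (AE : Type) [NormedAddCommGroup AE] [NormedSpace ℝ AE] [CompleteSpace AE]
    (δ : X → AE) (hδ0 : δ x₀ = 0) (hδ : Isometry δ)
    (hdense : (Submodule.span ℝ (Set.range δ)).topologicalClosure = ⊤)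
    (huniv : ∀ (W : Type) [NormedAddCommGroup W] [NormedSpace ℝ W] [CompleteSpace W]
      (f : X → W) (L : NNReal), f x₀ = 0 → LipschitzWith L f →
      ∃ T : AE →L[ℝ] W, (∀ x, T (δ x) = f x) ∧ ‖T‖ ≤ L)
    (E : Type) [NormedAddCommGroup E] [NormedSpace ℝ E] [CompleteSpace E] :
    (∀ (f : X → E) (L : NNReal), f x₀ = 0 → LipschitzWith L f →
      ∃! T : AE →L[ℝ] E, ∀ x, T (δ x) = f x) ∧
    (∀ (f : X → E) (L : NNReal), f x₀ = 0 → LipschitzWith L f →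
      ∀ T : AE →L[ℝ] E, (∀ x, T (δ x) = f x) →
        (LipschitzWith ‖T‖₊ f ∧ ∀ K : NNReal, LipschitzWith K f → ‖T‖ ≤ K)) ∧
    (∀ T : AE →L[ℝ] E, ∃ f : X → E, f x₀ = 0 ∧ LipschitzWith ‖T‖₊ f ∧
      ∀ x, T (δ x) = f x) := by

  -- uniqueness on dense span
  have uniq : ∀ T S : AE →L[ℝ] E, (∀ x, T (δ x) = S (δ x)) → T = S := by
    intro T S h
    have hker : Submodule.span ℝ (Set.range δ) ≤ LinearMap.ker ((T - S : AE →L[ℝ] E) : AE →ₗ[ℝ] E) := by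
      rw [Submodule.span_le]
      rintro _ ⟨x, rfl⟩
      simp [LinearMap.mem_ker, h x, sub_eq_zero]
    have hclos : (Submodule.span ℝ (Set.range δ)).topologicalClosure ≤
        LinearMap.ker ((T - S : AE →L[ℝ] E) : AE →ₗ[ℝ] E) := by
      exact Submodule.topologicalClosure_minimal _ hker (ContinuousLinearMap.isClosed_ker (T - S))
    rw [hdense, top_le_iff] at hclos
    have : ∀ v, (T - S) v = 0 := by
      intro v
      have := hclos ▸ Submodule.mem_top (R := ℝ) (M := AE) (x := v)
      simpa [LinearMap.mem_ker] using this
    ext v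
    have := this v
    simpa [sub_eq_zero] using this
  have lipOf : ∀ (T : AE →L[ℝ] E), LipschitzWith ‖T‖₊ (fun x => T (δ x)) := by
    intro T
    apply LipschitzWith.of_dist_le_mul
    intro x y
    have : dist (T (δ x)) (T (δ y)) ≤ ‖T‖ * dist (δ x) (δ y) := by
      rw [dist_eq_norm, dist_eq_norm, ← map_sub]
      exact T.le_opNorm _
    rw [hδ.dist_eq] at this
    simpa using this
  refine ⟨?_, ?_, ?_⟩
  · intro f L hf0 hfl
    obtain ⟨T, hT, -⟩ := huniv E f L hf0 hfl
    exact ⟨T, hT, fun S hS => uniq S T (fun x => by rw [hS x, hT x])⟩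
  · intro f L hf0 hfl T hT
    constructor
    · have := lipOf T
      simpa [funext hT] using this
    · intro K hK
      obtain ⟨S, hS, hSn⟩ := huniv E f K hf0 hK
      have : T = S := uniq T S (fun x => by rw [hT x, hS x])
      exact this ▸ hSn
  · intro T
    exact ⟨fun x => T (δ x), by simp [hδ0], lipOf T, fun x => rfl⟩
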